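/- A loop satisfying the extra identity x·(y·(z·x)) = ((x·y)·z)·x (D15) satisfies the identity (x·y)·(x·z) = (x·(y·x))·z (B23). -/
import Mathlib


/-- A loop: a set with multiplication, left division `ldiv` (written `\`),
right division `rdiv` (written `/`), and a two-sided identity `e`. -/
structure Loop (α : Type) where
  mul : α → α → α
  ldiv : α → α → α
  rdiv : α → α → α
  e : α
  mul_ldiv : ∀ a b, mul a (ldiv a b) = b
  rdiv_mul : ∀ a b, mul (rdiv b a) a = b
  ldiv_mul : ∀ a b, ldiv a (mul a b) = b
  mul_rdiv : ∀ a b, rdiv (mul b a) a = b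
  e_mul : ∀ a, mul e a = a
  mul_e : ∀ a, mul a e = a

theorem stmt_15 (α : Type) (L : Loop α) (h : ∀ x y z : α, L.mul x (L.mul y (L.mul z x)) = L.mul (L.mul (L.mul x y) z) x) :
    ∀ x y z : α, L.mul x (L.mul (L.mul y x) z) = L.mul (L.mul x y) (L.mul x z) := by
  set m := L.mul with hm
  set ld := L.ldiv with hld
  set rd := L.rdiv with hrd
  set e := L.e with he
  have mul_ldiv : ∀ a b, m a (ld a b) = b := L.mul_ldiv
  have rdiv_mul : ∀ a b, m (rd b a) a = b := L.rdiv_mul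
  have ldiv_mul : ∀ a b, ld a (m a b) = b := L.ldiv_mul
  have mul_rdiv : ∀ a b, rd (m b a) a = b := L.mul_rdiv
  have e_mul : ∀ a, m e a = a := L.e_mul
  have mul_e : ∀ a, m a e = a := L.mul_e
  -- u / x = u * (e/x)
  have rd_eq0 : ∀ u x : α, rd u x = m u (rd e x) := by
    intro u x
    have h1 := h x (ld x u) (rd e x)
    rw [rdiv_mul, mul_e, mul_ldiv] at h1
    -- h1 : u = m (m u (rd e x)) x
    calc rd u x = rd (m (m u (rd e x)) x) x := by rw [← h1]
      _ = m u (rd e x) := mul_rdiv x _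
  -- x \ u = (x\e) * u
  have ld_eq0 : ∀ u x : α, ld x u = m (ld x e) u := by
    intro u x
    have h1 := h x (ld x e) (rd u x)
    rw [rdiv_mul, mul_ldiv, e_mul, rdiv_mul] at h1
    -- h1 : m x (m (ld x e) u) = u
    calc ld x u = ld x (m x (m (ld x e) u)) := by rw [h1]
      _ = m (ld x e) u := ldiv_mul x _
  have mul_lam : ∀ x : α, m x (rd e x) = e := by
    intro x
    have h1 := rd_eq0 x x
    have h2 : rd x x = e := by
      have := mul_rdiv x e
      rwa [e_mul] at this
    rw [h2] at h1
    exact h1.symm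
  have lam_eq_rho : ∀ x : α, rd e x = ld x e := by
    intro x
    calc rd e x = ld x (m x (rd e x)) := (ldiv_mul x _).symm
      _ = ld x e := by rw [mul_lam]
  set i := fun x : α => ld x e with hi
  have ld_eq : ∀ u x : α, ld x u = m (i x) u := ld_eq0
  have rd_eq : ∀ u x : α, rd u x = m u (i x) := by
    intro u x
    rw [rd_eq0, lam_eq_rho]
  have mul_i : ∀ x : α, m x (i x) = e := fun x => mul_ldiv x e
  have i_mul : ∀ x : α, m (i x) x = e := by
    intro x
    have h1 := ld_eq x x
    have h2 : ld x x = e := by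
      have := ldiv_mul x e
      rwa [mul_e] at this
    rw [h2] at h1
    exact h1.symm
  have lip : ∀ x u : α, m (i x) (m x u) = u := by
    intro x u; rw [← ld_eq]; exact ldiv_mul x u
  have lip' : ∀ x u : α, m x (m (i x) u) = u := by
    intro x u; rw [← ld_eq]; exact mul_ldiv x u
  have rip : ∀ x u : α, m (m u x) (i x) = u := by
    intro x u; rw [← rd_eq]; exact mul_rdiv x u
  have rip' : ∀ x u : α, m (m u (i x)) x = u := by
    intro x u; rw [← rd_eq]; exact rdiv_mul x u
  have i_i : ∀ x : α, i (i x) = x := by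
    intro x
    calc i (i x) = ld (i x) e := rfl
      _ = ld (i x) (m (i x) x) := by rw [i_mul]
      _ = x := ldiv_mul _ x
  have i_anti : ∀ x y : α, i (m x y) = m (i y) (i x) := by
    intro x y
    have e1 : m (m x y) (i y) = x := rip y x
    have e2 : m (i (m x y)) x = i y := by
      have := lip (m x y) (i y)
      rwa [e1] at this
    calc i (m x y) = m (m (i (m x y)) x) (i x) := (rip x _).symm
      _ = m (i y) (i x) := by rw [e2]
  -- A' : (b(aw))a = (ba)(wa)
  have A' : ∀ a b w : α, m (m b (m a w)) a = m (m b a) (m w a) := by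
    intro a b w
    set s := m (m b a) (m w a) with hs
    have hE := h (i a) (i b) s
    -- rewrite RHS of hE
    have hba : m (m (i a) (i b)) s = m w a := by
      rw [← i_anti b a, hs, lip]
    rw [hba, rip] at hE
    -- hE : m (i a) (m (i b) (m s (i a))) = w
    have h2 : m (i b) (m s (i a)) = m a w := by
      have := congrArg (m a) hE
      rwa [lip'] at this
    have h3 : m s (i a) = m b (m a w) := by
      have := congrArg (m b) h2
      rwa [lip'] at this
    calc m (m b (m a w)) a = m (m s (i a)) a := by rw [h3]
      _ = s := rip' a s
  -- conclude via inversion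
  intro x y z
  have hA := A' (i x) (i z) (i y)
  have := congrArg i hA
  simp only [i_anti, i_i] at this
  exact this
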